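/- Let K ⊆ ℝⁿ be a closed cone and x̄ ∈ K. Then every vector in the regular (Fréchet) normal cone to K at x̄ belongs to the limiting normal cone to K at the origin: N̂(x̄; K) ⊆ N(0; K). -/

import Mathlib

open scoped RealInnerProductSpace Topology ENNReal
open Filter MeasureTheory

abbrev En (n : ℕ) := EuclideanSpace ℝ (Fin n)

/-- `K` is a cone: closed under multiplication by nonnegative scalars. -/
def IsConeSet {n : ℕ} (K : Set (En n)) : Prop :=
  ∀ x ∈ K, ∀ l : ℝ, 0 ≤ l → l • x ∈ K

/-- The distance function to a set. -/
noncomputable def distFn {n : ℕ} (K : Set (En n)) (x : En n) : ℝ :=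
  Metric.infDist x K

/-- `v` is a regular (Fréchet) subgradient of `f` at `x`. -/
def FSubgrad {n : ℕ} (f : En n → ℝ) (x v : En n) : Prop :=
  ∀ ε > (0:ℝ), ∃ δ > (0:ℝ), ∀ y : En n, ‖y - x‖ < δ →
    f y - f x - ⟪v, y - x⟫ ≥ -ε * ‖y - x‖

/-- `v` is a limiting (Mordukhovich) subgradient of `f` at `x`. -/
def LimSubgrad {n : ℕ} (f : En n → ℝ) (x v : En n) : Prop :=
  ∃ xs vs : ℕ → En n, (∀ k, FSubgrad f (xs k) (vs k)) ∧
    Tendsto xs atTop (𝓝 x) ∧ Tendsto vs atTop (𝓝 v)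

/-- `v` belongs to the regular (Fréchet) normal cone to `Θ` at `x`. -/
def RegNormal {n : ℕ} (Θ : Set (En n)) (x v : En n) : Prop :=
  ∀ ε > (0:ℝ), ∃ δ > (0:ℝ), ∀ y ∈ Θ, ‖y - x‖ < δ → ⟪v, y - x⟫ ≤ ε * ‖y - x‖

/-- The regular (Fréchet) normal cone as a set. -/
def RegNCone {n : ℕ} (Θ : Set (En n)) (x : En n) : Set (En n) :=
  {v | RegNormal Θ x v}

/-- `v` belongs to the limiting (Mordukhovich) normal cone to `Θ` at `x`. -/
def LimNormal {n : ℕ} (Θ : Set (En n)) (x v : En n) : Prop :=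
  ∃ xs vs : ℕ → En n, (∀ k, xs k ∈ Θ) ∧ (∀ k, RegNormal Θ (xs k) (vs k)) ∧
    Tendsto xs atTop (𝓝 x) ∧ Tendsto vs atTop (𝓝 v)

/-- The limiting normal cone as a set. -/
def LimNCone {n : ℕ} (Θ : Set (En n)) (x : En n) : Set (En n) :=
  {v | LimNormal Θ x v}

/-- The contingent (Bouligand) tangent cone to `Θ` at `x`. -/
def TanCone {n : ℕ} (Θ : Set (En n)) (x : En n) : Set (En n) :=
  {v | ∃ (τ : ℕ → ℝ) (vs : ℕ → En n), (∀ k, 0 < τ k) ∧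
    Tendsto τ atTop (𝓝 0) ∧ Tendsto vs atTop (𝓝 v) ∧ ∀ k, x + τ k • vs k ∈ Θ}

/-- A multifunction `M : Ω ⇉ ℝⁿ` is measurable: inverse images of open sets are measurable. -/
def MeasMulti {Ω : Type*} [MeasurableSpace Ω] {n : ℕ} (M : Ω → Set (En n)) : Prop :=
  ∀ U : Set (En n), IsOpen U → MeasurableSet {ω | (M ω ∩ U).Nonempty}

/-- The essential intersection of a measurable multifunction. -/
def Minter {Ω : Type*} [MeasurableSpace Ω] (μ : Measure Ω) {n : ℕ} (M : Ω → Set (En n)) :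
    Set (En n) :=
  {x | ∀ᵐ ω ∂μ, x ∈ M ω}

/-- The Aumann integral of a set-valued mapping. -/
noncomputable def AumannInt {Ω : Type*} [MeasurableSpace Ω] (μ : Measure Ω) {n : ℕ}
    (F : Ω → Set (En n)) : Set (En n) :=
  {y | ∃ g : Ω → En n, Integrable g μ ∧ (∀ᵐ ω ∂μ, g ω ∈ F ω) ∧ (∫ ω, g ω ∂μ) = y}

lemma regNormal_smul {n : ℕ} {K : Set (En n)} (hKcone : IsConeSet K)
    {xbar v : En n} (hv : RegNormal K xbar v) {t : ℝ} (ht : 0 < t) :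
    RegNormal K (t • xbar) v := by
  intro ε hε
  obtain ⟨δ, hδ, h⟩ := hv ε hε
  refine ⟨t * δ, by positivity, fun y hy hyd => ?_⟩
  have hy' : t⁻¹ • y ∈ K := hKcone y hy t⁻¹ (by positivity)
  have key : y - t • xbar = t • (t⁻¹ • y - xbar) := by
    rw [smul_sub, smul_smul, mul_inv_cancel₀ ht.ne', one_smul]
  have hnorm : ‖y - t • xbar‖ = t * ‖t⁻¹ • y - xbar‖ := by
    rw [key, norm_smul, Real.norm_eq_abs, abs_of_pos ht]
  have hlt : ‖t⁻¹ • y - xbar‖ < δ := by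
    have := hyd
    rw [hnorm] at this
    exact lt_of_mul_lt_mul_left (by linarith) ht.le
  have := h (t⁻¹ • y) hy' hlt
  calc ⟪v, y - t • xbar⟫ = t * ⟪v, t⁻¹ • y - xbar⟫ := by
        rw [key, real_inner_smul_right]
    _ ≤ t * (ε * ‖t⁻¹ • y - xbar‖) := by
        exact mul_le_mul_of_nonneg_left this ht.le
    _ = ε * ‖y - t • xbar‖ := by rw [hnorm]; ring

/-- for a closed cone `K` and `x̄ ∈ K`, `N̂(x̄;K) ⊆ N(0;K)`. -/
theorem regular_normal_cone_subset_limiting_normal_cone_at_zero {n : ℕ}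
    (K : Set (En n)) (hKne : K.Nonempty) (hKcl : IsClosed K) (hKcone : IsConeSet K)
    (xbar : En n) (hx : xbar ∈ K) :
    RegNCone K xbar ⊆ LimNCone K 0 := by
  intro v hv
  refine ⟨fun k => ((k : ℝ) + 1)⁻¹ • xbar, fun _ => v, fun k =>
    hKcone xbar hx _ (by positivity), fun k =>
    regNormal_smul hKcone hv (by positivity), ?_, tendsto_const_nhds⟩
  have h0 : Tendsto (fun k : ℕ => ((k : ℝ) + 1)⁻¹) atTop (𝓝 0) :=
    by simpa [one_div] using (tendsto_one_div_add_atTop_nhds_zero_nat :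
      Tendsto (fun n : ℕ => 1 / ((n : ℝ) + 1)) atTop (𝓝 0))
  have := h0.smul_const xbar
  simpa using this
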